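/- Let A be an integral domain and J ⊆ A an ideal such that A is J-adically complete. Let I ⊆ A⟦t⟧ be a prime ideal with t ∉ I, and let c be a nonzero element of the ideal (J) of A⟦t⟧ generated by the image of J. Then: (1) if c ∈ I, then t + c^p ∉ I for every integer p ≥ 1; (2) if c ∉ I, then there is at most one integer p ≥ 1 such that t + c^p ∈ I. -/

import Mathlib

/-- Let `A` be an integral domain which is `J`-adically complete, `I ⊆ A⟦t⟧` a prime ideal
with `t ∉ I`, and `c` a nonzero element of the ideal `(J)` of `A⟦t⟧` generated by the image
of `J`.  Then (1) if `c ∈ I` then `t + c^p ∉ I` for all `p ≥ 1`; (2) if `c ∉ I` then there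
is at most one integer `p ≥ 1` with `t + c^p ∈ I`. -/
theorem powerSeries_translate_pow_mem_prime
    {A : Type*} [CommRing A] [IsDomain A] (J : Ideal A) [IsAdicComplete J A]
    (I : Ideal (PowerSeries A)) (hI : I.IsPrime)
    (htX : (PowerSeries.X : PowerSeries A) ∉ I)
    (c : PowerSeries A) (hcJ : c ∈ Ideal.map (PowerSeries.C : A →+* PowerSeries A) J) (hc0 : c ≠ 0) :
    (c ∈ I → ∀ p : ℕ, 1 ≤ p → PowerSeries.X + c ^ p ∉ I) ∧
    (c ∉ I → {p : ℕ | 1 ≤ p ∧ PowerSeries.X + c ^ p ∈ I}.Subsingleton) := by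
  -- constant coefficient of c lies in J
  have hc0J : (PowerSeries.constantCoeff (R := A)) c ∈ J := by
    have : Ideal.map (PowerSeries.C (R := A)) J ≤ J.comap (PowerSeries.constantCoeff (R := A)) := by
      rw [Ideal.map_le_iff_le_comap]
      intro a ha
      simpa [Ideal.mem_comap] using ha
    exact this hcJ
  -- 1 - c^m is a unit for m ≥ 1
  have hunit : ∀ m : ℕ, 1 ≤ m → IsUnit (1 - c ^ m) := by
    intro m hm
    rw [PowerSeries.isUnit_iff_constantCoeff]
    apply Ideal.isUnit_of_sub_one_mem_jacobson_bot
    have : (PowerSeries.constantCoeff (R := A)) c ^ m ∈ J :=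
      Ideal.pow_mem_of_mem J hc0J m hm
    have h2 : -((PowerSeries.constantCoeff (R := A)) c ^ m) ∈ (⊥ : Ideal A).jacobson :=
      neg_mem (IsAdicComplete.le_jacobson_bot (I := J) this)
    simpa [map_pow] using h2
  constructor
  · intro hcI p hp h
    apply htX
    have : c ^ p ∈ I := Ideal.pow_mem_of_mem I hcI p hp
    simpa using I.sub_mem h this
  · intro hcI
    have key : ∀ p q : ℕ, p < q → PowerSeries.X + c ^ p ∈ I →
        PowerSeries.X + c ^ q ∈ I → False := by
      intro p q h hp hq
      have hfac : c ^ p * (1 - c ^ (q - p)) ∈ I := by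
        have heq : c ^ p * (1 - c ^ (q - p)) = c ^ p - c ^ q := by
          rw [mul_sub, mul_one, ← pow_add, Nat.add_sub_cancel' h.le]
        rw [heq]
        simpa using I.sub_mem hp hq
      rcases hI.mem_or_mem hfac with h1 | h1
      · exact hcI (hI.mem_of_pow_mem _ h1)
      · have hu := hunit (q - p) (by omega)
        exact hI.ne_top (I.eq_top_of_isUnit_mem h1 hu)
    intro p hp q hq
    rcases lt_trichotomy p q with h | h | h
    · exact absurd (key p q h hp.2 hq.2) not_false
    · exact h
    · exact absurd (key q p h hq.2 hp.2) not_false
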